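/- arXiv:1510.05455 — 2 statements merged into one kernel-verified Lean document; each statement's English description precedes it below -/
import Mathlib

section
/- Let v be a radial weight in the class D̂ satisfying M₁(v) = sup_{0<r<1} (∫_r¹ v̂(s)/(1-s)² ds)^{1/2} (∫₀^r 1/v̂(s) ds)^{1/2} < ∞. Then for every q > 0 there exists a constant C = C(q,v) > 0 such that Σ_{n=1}^k 2^{-qn} (v_{2^{n+1}})^{-q} ≤ C · 2^{-qk} (v_{2^{k+1}})^{-q} for all integers k ≥ 1, where v_x = ∫₀¹ s^x v(s) ds. -/
open MeasureTheory Real Set Filter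

noncomputable section

/-- `hatw v r = ∫_r^1 v(s) ds`. -/
def hatw (v : ℝ → ℝ) (r : ℝ) : ℝ := ∫ s in r..1, v s

/-- A radial weight: measurable, positive on `[0,1)`, integrable on `(0,1)`. -/
def RadialWeight (v : ℝ → ℝ) : Prop :=
  Measurable v ∧ (∀ r ∈ Set.Ico (0:ℝ) 1, 0 < v r) ∧
    MeasureTheory.IntegrableOn v (Set.Ioo 0 1)

/-- Membership in the class `D̂`. -/
def DoublingD (v : ℝ → ℝ) : Prop :=
  ∃ C : ℝ, 1 ≤ C ∧ ∀ r ∈ Set.Ico (0:ℝ) 1, hatw v r ≤ C * hatw v ((1+r)/2)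

/-- Squared Dirichlet-type norm `‖f‖_{D_v}^2`. -/
def DvSq (v : ℝ → ℝ) (f : ℂ → ℂ) : ENNReal :=
  (‖f 0‖₊ : ENNReal)^2 +
    (ENNReal.ofReal Real.pi)⁻¹ *
      ∫⁻ z in Metric.ball (0:ℂ) 1, (‖deriv f z‖₊ : ENNReal)^2 * ENNReal.ofReal (v ‖z‖)

/-- The Muckenhoupt type quantity `M₁(v)`. -/
def M1v (v : ℝ → ℝ) : ENNReal :=
  ⨆ r ∈ Set.Ioo (0:ℝ) 1,
    (∫⁻ s in Set.Ioo r 1, ENNReal.ofReal (hatw v s / (1-s)^2)) ^ (1/2 : ℝ) *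
    (∫⁻ s in Set.Ioo (0:ℝ) r, ENNReal.ofReal (1 / hatw v s)) ^ (1/2 : ℝ)

/-- The Muckenhoupt type quantity `M₂(v)`. -/
def M2v (v : ℝ → ℝ) : ENNReal :=
  ⨆ r ∈ Set.Ioo (0:ℝ) 1,
    (∫⁻ s in Set.Ioo (0:ℝ) r, ENNReal.ofReal (hatw v s / (1-s)^4)) ^ (1/2 : ℝ) *
    (∫⁻ s in Set.Ioo r 1, ENNReal.ofReal ((1-s)^2 / hatw v s)) ^ (1/2 : ℝ)

/-- The moment `v_x = ∫_0^1 s^x v(s) ds`. -/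
def vx (v : ℝ → ℝ) (x : ℕ) : ℝ := ∫ s in (0:ℝ)..1, s^x * v s

/-- `M_∞(s,f)`, the maximum of `|f|` on the circle of radius `s`. -/
def Minf (f : ℂ → ℂ) (s : ℝ) : ℝ := sSup ((fun z => ‖f z‖) '' Metric.sphere (0:ℂ) s)

/-- `M₂(r,h)`. -/
def M2mean (h : ℂ → ℂ) (r : ℝ) : ℝ :=
  Real.sqrt ((2*Real.pi)⁻¹ * ∫ θ in (-Real.pi)..Real.pi, ‖h ((r:ℂ) * Complex.exp (θ * Complex.I))‖^2)

/-- The norm of `B(2,∞)` (with values in `[0,∞]`). -/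
def B2infE (g : ℂ → ℂ) : ENNReal :=
  (‖g 0‖₊ : ENNReal) +
    ⨆ r ∈ Set.Ioo (0:ℝ) 1, ENNReal.ofReal (M2mean (deriv g) r * Real.sqrt (1-r))

/-- The `p`-th power of the norm of `B(2,p)` (with values in `[0,∞]`). -/
def B2pE (p : ℝ) (g : ℂ → ℂ) : ENNReal :=
  ENNReal.ofReal (‖g 0‖ ^ p) +
    ∫⁻ r in Set.Ioo (0:ℝ) 1, ENNReal.ofReal (M2mean (deriv g) r ^ p * (1-r)^(p/2-1))

/-- The generalized Hilbert operator `H_g`. -/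
def Hg (g f : ℂ → ℂ) (z : ℂ) : ℂ := ∫ t in Set.Ioo (0:ℝ) 1, f t * deriv g (t * z)

/-- The Hilbert operator `H` acting on functions on `[0,1)`. -/
def Hop (φ : ℝ → ℂ) (z : ℂ) : ℂ := ∫ t in Set.Ioo (0:ℝ) 1, φ t / (1 - t * z)

/-- The sublinear Hilbert operator `H̃`. -/
def Htil (φ : ℝ → ℂ) (z : ℂ) : ℂ := ∫ t in Set.Ioo (0:ℝ) 1, (‖φ t‖ : ℂ) / (1 - t * z)

/-- Squared norm in `L²_{V̂₂}`. -/
def L2V2sq (v : ℝ → ℝ) (φ : ℝ → ℂ) : ENNReal :=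
  ∫⁻ t in Set.Ioo (0:ℝ) 1, (‖φ t‖₊ : ENNReal)^2 * ENNReal.ofReal (hatw v t / (1-t)^2)

/-- Taylor coefficient `ĝ(k)` of `g` at the origin. -/
def gcoef (g : ℂ → ℂ) (k : ℕ) : ℂ := iteratedDeriv k g 0 / (Nat.factorial k)




variable {v : ℝ → ℝ}

lemma aux_intIoc (hv : RadialWeight v) : IntegrableOn v (Set.Ioc 0 1) :=
  (integrableOn_Ioc_iff_integrableOn_Ioo).mpr hv.2.2

lemma aux_ii (hv : RadialWeight v) {a b : ℝ} (h0 : 0 ≤ a) (hab : a ≤ b) (hb : b ≤ 1) :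
    IntervalIntegrable v volume a b := by
  have : IntegrableOn v (Set.Ioc a b) :=
    (aux_intIoc hv).mono_set (Set.Ioc_subset_Ioc h0 hb)
  exact (intervalIntegrable_iff_integrableOn_Ioc_of_le hab).mpr this

lemma aux_ae_ne_one : ∀ᵐ x : ℝ, x ≠ (1:ℝ) := by
  have : (volume : Measure ℝ) {(1:ℝ)} = 0 := measure_singleton 1
  rw [ae_iff]
  simpa using this

lemma aux_int_nonneg (hv : RadialWeight v) {a b : ℝ} (h0 : 0 ≤ a) (hab : a ≤ b) (hb : b ≤ 1) :
    0 ≤ ∫ s in a..b, v s := by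
  rw [intervalIntegral.integral_of_le hab]
  apply setIntegral_nonneg_ae measurableSet_Ioc
  filter_upwards [aux_ae_ne_one] with x hx hmem
  exact le_of_lt (hv.2.1 x ⟨le_trans h0 (le_of_lt hmem.1), lt_of_le_of_ne (le_trans hmem.2 hb) hx⟩)

lemma hatw_anti (hv : RadialWeight v) {a b : ℝ} (h0 : 0 ≤ a) (hab : a ≤ b) (hb : b ≤ 1) :
    hatw v b ≤ hatw v a := by
  unfold hatw
  have h1 := intervalIntegral.integral_add_adjacent_intervals
    (aux_ii hv h0 hab hb) (aux_ii hv (le_trans h0 hab) hb le_rfl)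
  have h2 := aux_int_nonneg hv h0 hab hb
  linarith
lemma hatw_nonneg (hv : RadialWeight v) {a : ℝ} (h0 : 0 ≤ a) (ha : a ≤ 1) : 0 ≤ hatw v a :=
  aux_int_nonneg hv h0 ha le_rfl

lemma hatw_pos (hv : RadialWeight v) {a : ℝ} (h0 : 0 ≤ a) (ha : a < 1) : 0 < hatw v a := by
  unfold hatw
  apply intervalIntegral.intervalIntegral_pos_of_pos_on (aux_ii hv h0 (le_of_lt ha) le_rfl) _ ha
  intro x hx
  exact hv.2.1 x ⟨le_trans h0 (le_of_lt hx.1), hx.2⟩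

def Rr (j : ℕ) : ℝ := 1 - ((2:ℝ)^j)⁻¹

lemma two_pow_pos' (j : ℕ) : (0:ℝ) < 2^j := pow_pos two_pos j
lemma Rr_zero : Rr 0 = 0 := by simp [Rr]
lemma Rr_nonneg (j : ℕ) : 0 ≤ Rr j := by
  have h : ((2:ℝ)^j)⁻¹ ≤ 1 := by
    rw [inv_le_one_iff₀]; right; exact one_le_pow₀ (by norm_num)
  simp only [Rr]; linarith
lemma Rr_lt_one (j : ℕ) : Rr j < 1 := by
  have : (0:ℝ) < ((2:ℝ)^j)⁻¹ := by positivity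
  simp only [Rr]; linarith
lemma one_sub_Rr (j : ℕ) : 1 - Rr j = ((2:ℝ)^j)⁻¹ := by simp [Rr]
lemma Rr_succ (j : ℕ) : Rr (j+1) = (1 + Rr j)/2 := by
  have := two_pow_pos' j
  rw [Rr, Rr, pow_succ, mul_inv]; ring
lemma Rr_mono {j m : ℕ} (h : j ≤ m) : Rr j ≤ Rr m := by
  have h2 : ((2:ℝ)^m)⁻¹ ≤ ((2:ℝ)^j)⁻¹ := by
    apply inv_anti₀ (two_pow_pos' j)
    exact pow_le_pow_right₀ (by norm_num) h
  simp only [Rr]; linarith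


lemma pow_one_sub_le {t : ℝ} (ht0 : 0 < t) (ht1 : t ≤ 1) (K : ℕ) :
    (1-t)^K ≤ 1/((K:ℝ)*t + 1) := by
  have h0 : (0:ℝ) < (K:ℝ)*t + 1 := by positivity
  rw [le_div_iff₀ h0]
  have h2 : (1:ℝ) + (K:ℝ)*t ≤ (1+t)^K := one_add_mul_le_pow (by linarith) K
  have h1 : (1-t)^K * (1+t)^K ≤ 1 := by
    rw [← mul_pow]
    have he : (1-t)*(1+t) = 1 - t^2 := by ring
    rw [he]
    apply pow_le_one₀ (by nlinarith) (by nlinarith)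
  have h3 : (0:ℝ) ≤ (1-t)^K := pow_nonneg (by linarith) K
  nlinarith [mul_le_mul_of_nonneg_left h2 h3]

lemma geo_sum_le : ∀ m : ℕ, (∑ j ∈ Finset.range m, ((2:ℝ)⁻¹)^(m-j)) ≤ 1 := by
  intro m
  induction m with
  | zero => simp
  | succ m ih =>
    rw [Finset.sum_range_succ]
    have he : ∀ j ∈ Finset.range m, ((2:ℝ)⁻¹)^(m+1-j) = 2⁻¹ * ((2:ℝ)⁻¹)^(m-j) := by
      intro j hj
      have hj' : j < m := Finset.mem_range.mp hj
      rw [show m+1-j = (m-j)+1 by omega, pow_succ]; ring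
    rw [Finset.sum_congr rfl he, ← Finset.mul_sum, show m+1-m = 1 by omega]
    have hs0 : (0:ℝ) ≤ ∑ j ∈ Finset.range m, ((2:ℝ)⁻¹)^(m-j) :=
      Finset.sum_nonneg fun j _ => by positivity
    norm_num
    linarith

lemma term_bound {C : ℝ} (hC0 : 0 ≤ C) {p : ℕ} (hP : 2*C ≤ 2^(2^p)) (j i : ℕ) :
    ((2:ℝ)^(p+1+j) / 2^(j+i))^(2^p) * C^i ≤ 2^((p+1)*2^p) * ((2:ℝ)⁻¹)^i := by
  have hp2 : (0:ℝ) < (2:ℝ)^(j+i) := by positivity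
  rw [div_pow, div_mul_eq_mul_div, div_le_iff₀ (by positivity)]
  have key : ((2:ℝ)*C)^i ≤ ((2:ℝ)^(2^p))^i :=
    pow_le_pow_left₀ (by positivity) hP i
  calc ((2:ℝ)^(p+1+j))^(2^p) * C^i
      = (2:ℝ)^((p+1)*2^p) * 2^(j*2^p) * C^i := by
        rw [← pow_mul, show (p+1+j)*2^p = (p+1)*2^p + j*2^p by ring, pow_add]
    _ = (2:ℝ)^((p+1)*2^p) * 2^(j*2^p) * (2⁻¹^i * (2*C)^i) := by
        rw [mul_pow]
        congr 1
        rw [← mul_assoc, ← mul_pow]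
        norm_num
    _ ≤ (2:ℝ)^((p+1)*2^p) * 2^(j*2^p) * (2⁻¹^i * ((2:ℝ)^(2^p))^i) := by
        have h1 : (0:ℝ) ≤ (2:ℝ)^((p+1)*2^p) * 2^(j*2^p) := by positivity
        have h2 : (0:ℝ) ≤ (2⁻¹:ℝ)^i := by positivity
        apply mul_le_mul_of_nonneg_left _ h1
        exact mul_le_mul_of_nonneg_left key h2
    _ = (2:ℝ)^((p+1)*2^p) * 2⁻¹^i * ((2:ℝ)^(j+i))^(2^p) := by
        rw [← pow_mul, ← pow_mul, show (j+i)*2^p = j*2^p + i*2^p by ring, pow_add,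
          show 2^p*i = i*2^p from Nat.mul_comm _ _]
        ring

lemma Rpow_bound (p d j : ℕ) :
    (Rr (j+1))^(2^(p+d)) ≤ ((2:ℝ)^(p+1+j) / 2^(p+d))^(2^p) := by
  set t : ℝ := ((2:ℝ)^(j+1))⁻¹ with ht
  have ht0 : 0 < t := by positivity
  have ht1 : t ≤ 1 := by
    rw [ht, inv_le_one_iff₀]; right; exact one_le_pow₀ one_le_two
  have hR : Rr (j+1) = 1 - t := by rw [Rr]
  have hinner : (Rr (j+1))^(2^d) ≤ (2:ℝ)^(p+1+j) / 2^(p+d) := by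
    rw [hR]
    calc (1-t)^(2^d) ≤ 1/(((2^d : ℕ):ℝ)*t + 1) := pow_one_sub_le ht0 ht1 (2^d)
      _ ≤ 1/(((2^d : ℕ):ℝ)*t) := by
          apply one_div_le_one_div_of_le
          · push_cast; positivity
          · linarith
      _ = (2:ℝ)^(p+1+j) / 2^(p+d) := by
          push_cast
          rw [ht]
          field_simp
          rw [← pow_add, ← pow_add]
          congr 1
          ring
  calc (Rr (j+1))^(2^(p+d))
      = ((Rr (j+1))^(2^d))^(2^p) := by
        rw [← pow_mul, ← pow_add, Nat.add_comm d p]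
    _ ≤ ((2:ℝ)^(p+1+j) / 2^(p+d))^(2^p) := by
        apply pow_le_pow_left₀ (pow_nonneg (Rr_nonneg _) _) hinner

lemma hatw_chain {v : ℝ → ℝ} {C : ℝ}
    (hC : ∀ r ∈ Set.Ico (0:ℝ) 1, hatw v r ≤ C * hatw v ((1+r)/2))
    (hC0 : 0 ≤ C) (j : ℕ) : ∀ i : ℕ, hatw v (Rr j) ≤ C^i * hatw v (Rr (j+i)) := by
  intro i
  induction i with
  | zero => simp
  | succ i ih =>
    have hmem : Rr (j+i) ∈ Set.Ico (0:ℝ) 1 := ⟨Rr_nonneg _, Rr_lt_one _⟩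
    have h1 := hC _ hmem
    rw [← Rr_succ (j+i)] at h1
    calc hatw v (Rr j) ≤ C^i * hatw v (Rr (j+i)) := ih
      _ ≤ C^i * (C * hatw v (Rr (j+i+1))) := by
          apply mul_le_mul_of_nonneg_left h1 (pow_nonneg hC0 i)
      _ = C^(i+1) * hatw v (Rr (j+(i+1))) := by rw [pow_succ, show j+(i+1) = j+i+1 by omega]; ring

variable {v : ℝ → ℝ}

lemma mom_intIoc (hv : RadialWeight v) (x : ℕ) :
    IntegrableOn (fun s => s^x * v s) (Set.Ioc 0 1) := by
  apply Integrable.mono' ((aux_intIoc hv).abs)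
  · exact ((measurable_id.pow_const x).mul hv.1).aestronglyMeasurable
  · rw [ae_restrict_iff' measurableSet_Ioc]
    apply ae_of_all
    intro s hs
    have h1 : |s| ≤ 1 := by rw [abs_of_pos hs.1]; exact hs.2
    calc ‖s^x * v s‖ = |s|^x * |v s| := by rw [norm_eq_abs, abs_mul, abs_pow]
      _ ≤ 1 * |v s| := by
          apply mul_le_mul_of_nonneg_right _ (abs_nonneg _)
          exact pow_le_one₀ (abs_nonneg s) h1
      _ = |v s| := one_mul _

lemma mom_ii (hv : RadialWeight v) (x : ℕ) {a b : ℝ} (h0 : 0 ≤ a) (hab : a ≤ b) (hb : b ≤ 1) :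
    IntervalIntegrable (fun s => s^x * v s) volume a b := by
  have : IntegrableOn (fun s => s^x * v s) (Set.Ioc a b) :=
    (mom_intIoc hv x).mono_set (Set.Ioc_subset_Ioc h0 hb)
  exact (intervalIntegrable_iff_integrableOn_Ioc_of_le hab).mpr this

lemma mom_tail (hv : RadialWeight v) (x : ℕ) {a : ℝ} (h0 : 0 ≤ a) (ha : a ≤ 1) :
    ∫ s in a..1, s^x * v s ≤ hatw v a := by
  apply intervalIntegral.integral_mono_on ha (mom_ii hv x h0 ha le_rfl)
    (aux_ii hv h0 ha le_rfl)
  intro s hs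
  rcases eq_or_lt_of_le hs.2 with h1 | h1
  · rw [h1, one_pow, one_mul]
  · have hv0 : 0 ≤ v s := le_of_lt (hv.2.1 s ⟨le_trans h0 hs.1, h1⟩)
    calc s^x * v s ≤ 1 * v s := by
          apply mul_le_mul_of_nonneg_right _ hv0
          exact pow_le_one₀ (le_trans h0 hs.1) hs.2
      _ = v s := one_mul _

lemma mom_piece (hv : RadialWeight v) (x j : ℕ) :
    ∫ s in (Rr j)..(Rr (j+1)), s^x * v s ≤ (Rr (j+1))^x * hatw v (Rr j) := by
  have h0 : (0:ℝ) ≤ Rr j := Rr_nonneg j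
  have hab : Rr j ≤ Rr (j+1) := Rr_mono (Nat.le_succ j)
  have hb1 : Rr (j+1) ≤ 1 := (Rr_lt_one _).le
  have step1 : ∫ s in (Rr j)..(Rr (j+1)), s^x * v s
      ≤ ∫ s in (Rr j)..(Rr (j+1)), (Rr (j+1))^x * v s := by
    apply intervalIntegral.integral_mono_on hab (mom_ii hv x h0 hab hb1)
      ((aux_ii hv h0 hab hb1).const_mul _)
    intro s hs
    have hv0 : 0 ≤ v s := le_of_lt (hv.2.1 s ⟨le_trans h0 hs.1, lt_of_le_of_lt hs.2 (Rr_lt_one _)⟩)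
    apply mul_le_mul_of_nonneg_right _ hv0
    exact pow_le_pow_left₀ (le_trans h0 hs.1) hs.2 x
  have step2 : ∫ s in (Rr j)..(Rr (j+1)), (Rr (j+1))^x * v s
      = (Rr (j+1))^x * ∫ s in (Rr j)..(Rr (j+1)), v s := intervalIntegral.integral_const_mul _ _
  have step3 : ∫ s in (Rr j)..(Rr (j+1)), v s ≤ hatw v (Rr j) := by
    have hadd := intervalIntegral.integral_add_adjacent_intervals
      (aux_ii hv h0 hab hb1) (aux_ii hv (le_trans h0 hab) hb1 le_rfl)
    have h4 : 0 ≤ hatw v (Rr (j+1)) := hatw_nonneg hv (le_trans h0 hab) hb1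
    unfold hatw; unfold hatw at h4; linarith
  calc ∫ s in (Rr j)..(Rr (j+1)), s^x * v s
      ≤ (Rr (j+1))^x * ∫ s in (Rr j)..(Rr (j+1)), v s := by rw [← step2]; exact step1
    _ ≤ (Rr (j+1))^x * hatw v (Rr j) :=
        mul_le_mul_of_nonneg_left step3 (pow_nonneg (Rr_nonneg _) x)

lemma vx_pos (hv : RadialWeight v) (x : ℕ) : 0 < vx v x := by
  unfold vx
  apply intervalIntegral.intervalIntegral_pos_of_pos_on
    (mom_ii hv x le_rfl zero_le_one le_rfl) _ one_pos
  intro s hs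
  exact mul_pos (pow_pos hs.1 x) (hv.2.1 s ⟨hs.1.le, hs.2⟩)

lemma moment_le (hv : RadialWeight v) {C : ℝ} (hC1 : 1 ≤ C)
    (hC : ∀ r ∈ Set.Ico (0:ℝ) 1, hatw v r ≤ C * hatw v ((1+r)/2)) :
    ∃ C₁ : ℝ, 0 < C₁ ∧ ∀ m : ℕ, vx v (2^m) ≤ C₁ * hatw v (Rr m) := by
  have hC0 : (0:ℝ) ≤ C := le_trans zero_le_one hC1
  obtain ⟨p, hp⟩ := pow_unbounded_of_one_lt (2*C) (one_lt_two (α := ℝ))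
  have hP : 2*C ≤ 2^(2^p) := by
    apply le_trans hp.le
    exact pow_le_pow_right₀ one_le_two (Nat.lt_two_pow_self (n := p)).le
  set K0 : ℝ := 2^((p+1)*2^p) with hK0
  have hK0pos : 0 < K0 := by positivity
  set c2 : ℝ := hatw v 0 / hatw v (Rr p) with hc2
  have hc2nn : 0 ≤ c2 := div_nonneg (hatw_nonneg hv le_rfl zero_le_one)
    (hatw_nonneg hv (Rr_nonneg p) (Rr_lt_one p).le)
  refine ⟨max (K0 + 1) c2, lt_of_lt_of_le (by linarith) (le_max_left _ _), ?_⟩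
  intro m
  have hwm_nn : 0 ≤ hatw v (Rr m) := hatw_nonneg hv (Rr_nonneg m) (Rr_lt_one m).le
  rcases le_or_gt p m with hpm | hmp
  · -- main case
    obtain ⟨d, rfl⟩ : ∃ d, m = p + d := ⟨m - p, by omega⟩
    set m := p + d with hm
    have hsum : ∑ j ∈ Finset.range m, ∫ s in (Rr j)..(Rr (j+1)), s^(2^m) * v s
        = ∫ s in (Rr 0)..(Rr m), s^(2^m) * v s := by
      apply intervalIntegral.sum_integral_adjacent_intervals
      intro k hk
      exact mom_ii hv _ (Rr_nonneg k) (Rr_mono (Nat.le_succ k)) (Rr_lt_one _).le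
    have hadd : (∫ s in (Rr 0)..(Rr m), s^(2^m) * v s) + ∫ s in (Rr m)..1, s^(2^m) * v s
        = ∫ s in (Rr 0)..(1:ℝ), s^(2^m) * v s := by
      apply intervalIntegral.integral_add_adjacent_intervals
      · exact mom_ii hv _ (Rr_nonneg 0) (Rr_mono (Nat.zero_le m)) (Rr_lt_one _).le
      · exact mom_ii hv _ (Rr_nonneg m) (Rr_lt_one m).le le_rfl
    have hdecomp : vx v (2^m)
        = (∑ j ∈ Finset.range m, ∫ s in (Rr j)..(Rr (j+1)), s^(2^m) * v s)
          + ∫ s in (Rr m)..1, s^(2^m) * v s := by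
      rw [hsum, hadd, vx, Rr_zero]
    have hterm : ∀ j ∈ Finset.range m, (∫ s in (Rr j)..(Rr (j+1)), s^(2^m) * v s)
        ≤ (K0 * hatw v (Rr m)) * ((2:ℝ)⁻¹)^(m-j) := by
      intro j hj
      have hjm : j < m := Finset.mem_range.mp hj
      have hji : j + (m - j) = m := by omega
      have hchain : hatw v (Rr j) ≤ C^(m-j) * hatw v (Rr m) := by
        have := hatw_chain hC hC0 j (m-j)
        rwa [hji] at this
      have hRnn : (0:ℝ) ≤ (Rr (j+1))^(2^m) := pow_nonneg (Rr_nonneg _) _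
      calc ∫ s in (Rr j)..(Rr (j+1)), s^(2^m) * v s
          ≤ (Rr (j+1))^(2^m) * hatw v (Rr j) := mom_piece hv _ j
        _ ≤ (Rr (j+1))^(2^m) * (C^(m-j) * hatw v (Rr m)) :=
            mul_le_mul_of_nonneg_left hchain hRnn
        _ ≤ ((2:ℝ)^(p+1+j) / 2^(p+d))^(2^p) * (C^(m-j) * hatw v (Rr m)) := by
            apply mul_le_mul_of_nonneg_right (Rpow_bound p d j)
            exact mul_nonneg (pow_nonneg hC0 _) hwm_nn
        _ = (((2:ℝ)^(p+1+j) / 2^(j+(m-j)))^(2^p) * C^(m-j)) * hatw v (Rr m) := by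
            rw [hji]; ring
        _ ≤ (K0 * ((2:ℝ)⁻¹)^(m-j)) * hatw v (Rr m) :=
            mul_le_mul_of_nonneg_right (term_bound hC0 hP j (m-j)) hwm_nn
        _ = (K0 * hatw v (Rr m)) * ((2:ℝ)⁻¹)^(m-j) := by ring
    calc vx v (2^m)
        = (∑ j ∈ Finset.range m, ∫ s in (Rr j)..(Rr (j+1)), s^(2^m) * v s)
          + ∫ s in (Rr m)..1, s^(2^m) * v s := hdecomp
      _ ≤ (∑ j ∈ Finset.range m, (K0 * hatw v (Rr m)) * ((2:ℝ)⁻¹)^(m-j))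
          + hatw v (Rr m) := by
          apply add_le_add (Finset.sum_le_sum hterm)
            (mom_tail hv _ (Rr_nonneg m) (Rr_lt_one m).le)
      _ = (K0 * hatw v (Rr m)) * (∑ j ∈ Finset.range m, ((2:ℝ)⁻¹)^(m-j))
          + hatw v (Rr m) := by rw [← Finset.mul_sum]
      _ ≤ (K0 * hatw v (Rr m)) * 1 + hatw v (Rr m) := by
          apply add_le_add_left
          exact mul_le_mul_of_nonneg_left (geo_sum_le m) (mul_nonneg hK0pos.le hwm_nn)
      _ = (K0 + 1) * hatw v (Rr m) := by ring
      _ ≤ max (K0 + 1) c2 * hatw v (Rr m) :=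
          mul_le_mul_of_nonneg_right (le_max_left _ _) hwm_nn
  · -- small case m < p
    have hwp_pos : 0 < hatw v (Rr p) := hatw_pos hv (Rr_nonneg p) (Rr_lt_one p)
    calc vx v (2^m) ≤ hatw v 0 := mom_tail hv _ le_rfl zero_le_one
      _ = c2 * hatw v (Rr p) := by rw [hc2, div_mul_cancel₀ _ (ne_of_gt hwp_pos)]
      _ ≤ c2 * hatw v (Rr m) := by
          apply mul_le_mul_of_nonneg_left _ hc2nn
          exact hatw_anti hv (Rr_nonneg m) (Rr_mono hmp.le) (Rr_lt_one p).le
      _ ≤ max (K0 + 1) c2 * hatw v (Rr m) :=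
          mul_le_mul_of_nonneg_right (le_max_right _ _) hwm_nn

def Phi (v : ℝ → ℝ) (r : ℝ) : ENNReal :=
  ∫⁻ s in Set.Ioo r 1, ENNReal.ofReal (hatw v s / (1-s)^2)
def Bfn (v : ℝ → ℝ) (r : ℝ) : ENNReal :=
  ∫⁻ s in Set.Ioo (0:ℝ) r, ENNReal.ofReal (1 / hatw v s)

lemma lint_const_le {T : Set ℝ} (hT : MeasurableSet T) {f : ℝ → ENNReal} {c : ENNReal}
    (h : ∀ x ∈ T, c ≤ f x) : c * volume T ≤ ∫⁻ x in T, f x := by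
  rw [← setLIntegral_const T c]
  apply lintegral_mono_ae
  filter_upwards [ae_restrict_mem hT] with x hx
  exact h x hx

lemma lint_le_const {T : Set ℝ} (hT : MeasurableSet T) {f : ℝ → ENNReal} {c : ENNReal}
    (h : ∀ x ∈ T, f x ≤ c) : ∫⁻ x in T, f x ≤ c * volume T := by
  rw [← setLIntegral_const T c]
  apply lintegral_mono_ae
  filter_upwards [ae_restrict_mem hT] with x hx
  exact h x hx

lemma P1 (v : ℝ → ℝ) {r : ℝ} (hr : r ∈ Set.Ioo (0:ℝ) 1) :
    (Phi v r) ^ (1/2 : ℝ) * (Bfn v r) ^ (1/2 : ℝ) ≤ M1v v :=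
  le_iSup₂ (f := fun r (_ : r ∈ Set.Ioo (0:ℝ) 1) =>
    (Phi v r) ^ (1/2 : ℝ) * (Bfn v r) ^ (1/2 : ℝ)) r hr

lemma P2 (v : ℝ → ℝ) {r : ℝ} (hr : r ∈ Set.Ioo (0:ℝ) 1) :
    Phi v r * Bfn v r ≤ (M1v v)^2 := by
  have h := P1 v hr
  have h2 : ((Phi v r) ^ (1/2:ℝ) * (Bfn v r) ^ (1/2:ℝ))^2 ≤ (M1v v)^2 := by
    rw [pow_two, pow_two]; exact mul_le_mul' h h
  calc Phi v r * Bfn v r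
      = ((Phi v r) ^ (1/2:ℝ) * (Bfn v r) ^ (1/2:ℝ))^2 := by
        rw [mul_pow, ← ENNReal.rpow_natCast ((Phi v r)^(1/2:ℝ)) 2,
          ← ENNReal.rpow_natCast ((Bfn v r)^(1/2:ℝ)) 2,
          ← ENNReal.rpow_mul, ← ENNReal.rpow_mul]
        norm_num
    _ ≤ (M1v v)^2 := h2

lemma B_low0 (hv : RadialWeight v) {r : ℝ} (hr : r ∈ Set.Ioo (0:ℝ) 1) :
    ENNReal.ofReal (1/hatw v 0) * ENNReal.ofReal r ≤ Bfn v r := by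
  have h0 : 0 < hatw v 0 := hatw_pos hv le_rfl one_pos
  have := lint_const_le (measurableSet_Ioo (a := (0:ℝ)) (b := r))
    (f := fun s => ENNReal.ofReal (1 / hatw v s)) (c := ENNReal.ofReal (1/hatw v 0)) ?_
  · calc ENNReal.ofReal (1/hatw v 0) * ENNReal.ofReal r
        = ENNReal.ofReal (1/hatw v 0) * volume (Set.Ioo (0:ℝ) r) := by
          rw [Real.volume_Ioo, sub_zero]
      _ ≤ Bfn v r := this
  · intro s hs
    apply ENNReal.ofReal_le_ofReal
    apply one_div_le_one_div_of_le (hatw_pos hv hs.1.le (lt_trans hs.2 hr.2))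
    exact hatw_anti hv le_rfl hs.1.le (le_of_lt (lt_trans hs.2 hr.2))

lemma B_pos (hv : RadialWeight v) {r : ℝ} (hr : r ∈ Set.Ioo (0:ℝ) 1) : 0 < Bfn v r := by
  have h0 : 0 < hatw v 0 := hatw_pos hv le_rfl one_pos
  calc (0:ENNReal) < ENNReal.ofReal (1/hatw v 0) * ENNReal.ofReal r := by
        apply ENNReal.mul_pos <;> simp [ENNReal.ofReal_pos, h0, hr.1, one_div, inv_pos]
    _ ≤ Bfn v r := B_low0 hv hr

lemma B_low (hv : RadialWeight v) {C : ℝ}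
    (hC : ∀ r' ∈ Set.Ico (0:ℝ) 1, hatw v r' ≤ C * hatw v ((1+r')/2))
    {r : ℝ} (hr : r ∈ Set.Ico (1/2:ℝ) 1) :
    ENNReal.ofReal ((1-r)/(C * hatw v r)) ≤ Bfn v r := by
  have hr0 : (0:ℝ) ≤ 2*r - 1 := by linarith [hr.1]
  have hr1 : 2*r - 1 < 1 := by linarith [hr.2]
  have hwr : 0 < hatw v r := hatw_pos hv (by linarith) hr.2
  have hC1 : 0 < C * hatw v r := by
    have : 0 < C := by
      by_contra hc
      push_neg at hc
      have h2 := hC (2*r-1) ⟨hr0, hr1⟩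
      have := hatw_pos hv hr0 hr1
      have hmid : 0 < hatw v ((1+(2*r-1))/2) :=
        hatw_pos hv (by linarith) (by linarith)
      nlinarith
    positivity
  have hsub : Set.Ioo (2*r-1) r ⊆ Set.Ioo (0:ℝ) r := by
    intro s hs; exact ⟨lt_of_le_of_lt hr0 hs.1, hs.2⟩
  have hkey : ∀ s ∈ Set.Ioo (2*r-1) r, ENNReal.ofReal (1/(C * hatw v r)) ≤
      ENNReal.ofReal (1/hatw v s) := by
    intro s hs
    apply ENNReal.ofReal_le_ofReal
    have hs1 : s < 1 := lt_trans hs.2 hr.2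
    have hws : 0 < hatw v s := hatw_pos hv (le_trans hr0 hs.1.le) hs1
    apply one_div_le_one_div_of_le hws
    calc hatw v s ≤ hatw v (2*r-1) := hatw_anti hv hr0 hs.1.le hs1.le
      _ ≤ C * hatw v ((1+(2*r-1))/2) := hC _ ⟨hr0, hr1⟩
      _ = C * hatw v r := by norm_num
  calc ENNReal.ofReal ((1-r)/(C * hatw v r))
      = ENNReal.ofReal (1/(C * hatw v r)) * ENNReal.ofReal (r - (2*r-1)) := by
        rw [← ENNReal.ofReal_mul (by positivity)]
        congr 1
        field_simp
        ring
    _ = ENNReal.ofReal (1/(C * hatw v r)) * volume (Set.Ioo (2*r-1) r) := by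
        rw [Real.volume_Ioo]
    _ ≤ ∫⁻ s in Set.Ioo (2*r-1) r, ENNReal.ofReal (1/hatw v s) :=
        lint_const_le measurableSet_Ioo hkey
    _ ≤ Bfn v r := lintegral_mono_set hsub

lemma Phi_low (hv : RadialWeight v) {r : ℝ} (hr : r ∈ Set.Ico (0:ℝ) 1) :
    ENNReal.ofReal (hatw v ((1+r)/2) / (2*(1-r))) ≤ Phi v r := by
  have h1r : 0 < 1 - r := by linarith [hr.2]
  have hmid0 : (0:ℝ) ≤ (1+r)/2 := by linarith [hr.1]
  have hmid1 : (1+r)/2 < 1 := by linarith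
  have hwnn : 0 ≤ hatw v ((1+r)/2) := hatw_nonneg hv hmid0 hmid1.le
  have hkey : ∀ s ∈ Set.Ioo r ((1+r)/2),
      ENNReal.ofReal (hatw v ((1+r)/2) / (1-r)^2) ≤ ENNReal.ofReal (hatw v s / (1-s)^2) := by
    intro s hs
    apply ENNReal.ofReal_le_ofReal
    have hs0 : 0 ≤ s := le_trans hr.1 hs.1.le
    have hs1 : s < 1 := lt_trans hs.2 hmid1
    have hnum : hatw v ((1+r)/2) ≤ hatw v s := hatw_anti hv hs0 hs.2.le hmid1.le
    have hden : (1-s)^2 ≤ (1-r)^2 := by nlinarith [hs.1]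
    exact div_le_div₀ (hatw_nonneg hv hs0 hs1.le) hnum (by nlinarith) hden
  calc ENNReal.ofReal (hatw v ((1+r)/2) / (2*(1-r)))
      = ENNReal.ofReal (hatw v ((1+r)/2) / (1-r)^2) * ENNReal.ofReal ((1+r)/2 - r) := by
        rw [← ENNReal.ofReal_mul (by positivity)]
        congr 1
        have h2 : (1+r)/2 - r = (1-r)/2 := by ring
        rw [h2]
        field_simp
    _ = ENNReal.ofReal (hatw v ((1+r)/2) / (1-r)^2) * volume (Set.Ioo r ((1+r)/2)) := by
        rw [Real.volume_Ioo]
    _ ≤ ∫⁻ s in Set.Ioo r ((1+r)/2), ENNReal.ofReal (hatw v s / (1-s)^2) :=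
        lint_const_le measurableSet_Ioo hkey
    _ ≤ Phi v r := lintegral_mono_set (fun s hs => ⟨hs.1, lt_trans hs.2 hmid1⟩)

lemma Phi_fin (hv : RadialWeight v) (hM1 : M1v v < ⊤) {r : ℝ} (hr : r ∈ Set.Ioo (0:ℝ) 1) :
    Phi v r ≠ ⊤ := by
  intro h
  have h2 := P2 v hr
  rw [h] at h2
  rw [ENNReal.top_mul (ne_of_gt (B_pos hv hr))] at h2
  exact absurd (lt_of_le_of_lt h2 (ENNReal.pow_lt_top hM1)) (lt_irrefl ⊤)

lemma Phi_up_real (hv : RadialWeight v) (hM1 : M1v v < ⊤) {C : ℝ} (hC1 : 1 ≤ C)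
    (hC : ∀ r' ∈ Set.Ico (0:ℝ) 1, hatw v r' ≤ C * hatw v ((1+r')/2))
    {r : ℝ} (hr : r ∈ Set.Ico (1/2:ℝ) 1) :
    (Phi v r).toReal * ((1-r)/(C * hatw v r)) ≤ ((M1v v)^2).toReal := by
  have hr' : r ∈ Set.Ioo (0:ℝ) 1 := ⟨by linarith [hr.1], hr.2⟩
  have h1 : Phi v r * ENNReal.ofReal ((1-r)/(C * hatw v r)) ≤ (M1v v)^2 :=
    le_trans (mul_le_mul' le_rfl (B_low hv hC hr)) (P2 v hr')
  have htop : (M1v v)^2 ≠ ⊤ := ne_of_lt (ENNReal.pow_lt_top hM1)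
  have h2 := ENNReal.toReal_mono htop h1
  rwa [ENNReal.toReal_mul, ENNReal.toReal_ofReal] at h2
  have hwr : 0 < hatw v r := hatw_pos hv (by linarith [hr.1]) hr.2
  have hr2 : r < 1 := hr.2
  have hc0 : (0:ℝ) < C := by linarith
  exact div_nonneg (by linarith) (by positivity)

lemma Phi_low_real (hv : RadialWeight v) (hM1 : M1v v < ⊤)
    {r : ℝ} (hr : r ∈ Set.Ioo (0:ℝ) 1) :
    hatw v ((1+r)/2) / (2*(1-r)) ≤ (Phi v r).toReal := by
  have h := Phi_low hv ⟨hr.1.le, hr.2⟩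
  have hfin := Phi_fin hv hM1 hr
  exact (ENNReal.ofReal_le_iff_le_toReal hfin).mp h

lemma Rr_one_half : Rr 1 = 1/2 := by norm_num [Rr]

lemma Rr_mem_Ioo {j : ℕ} (hj : 1 ≤ j) : Rr j ∈ Set.Ioo (0:ℝ) 1 := by
  constructor
  · calc (0:ℝ) < 1/2 := by norm_num
      _ = Rr 1 := Rr_one_half.symm
      _ ≤ Rr j := Rr_mono hj
  · exact Rr_lt_one j

lemma Phi_split (hv : RadialWeight v) (hM1 : M1v v < ⊤) (j : ℕ) (hj : 1 ≤ j) :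
    (Phi v (Rr (j+1))).toReal + hatw v (Rr (j+1)) * 2^j / 2 ≤ (Phi v (Rr j)).toReal := by
  have hmemj : Rr j ∈ Set.Ioo (0:ℝ) 1 := Rr_mem_Ioo hj
  have hmemj1 : Rr (j+1) ∈ Set.Ioo (0:ℝ) 1 := Rr_mem_Ioo (le_trans hj (Nat.le_succ j))
  have hab : Rr j ≤ Rr (j+1) := Rr_mono (Nat.le_succ j)
  have hwnn : 0 ≤ hatw v (Rr (j+1)) := hatw_nonneg hv hmemj1.1.le hmemj1.2.le
  set c : ℝ := hatw v (Rr (j+1)) / (1 - Rr j)^2 with hc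
  have h1mr : (0:ℝ) < 1 - Rr j := by linarith [hmemj.2]
  have hkey : ∀ s ∈ Set.Ioo (Rr j) (Rr (j+1)),
      ENNReal.ofReal c ≤ ENNReal.ofReal (hatw v s / (1-s)^2) := by
    intro s hs
    apply ENNReal.ofReal_le_ofReal
    have hs0 : 0 ≤ s := le_trans hmemj.1.le hs.1.le
    have hs1 : s < 1 := lt_trans hs.2 hmemj1.2
    have hnum : hatw v (Rr (j+1)) ≤ hatw v s := hatw_anti hv hs0 hs.2.le hmemj1.2.le
    have hden : (1-s)^2 ≤ (1-Rr j)^2 := by nlinarith [hs.1]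
    exact div_le_div₀ (hatw_nonneg hv hs0 hs1.le) hnum (by nlinarith) hden
  have hlow : ENNReal.ofReal (hatw v (Rr (j+1)) * 2^j / 2)
      ≤ ∫⁻ s in Set.Ioo (Rr j) (Rr (j+1)), ENNReal.ofReal (hatw v s / (1-s)^2) := by
    have h2 := lint_const_le measurableSet_Ioo hkey
    rw [Real.volume_Ioo] at h2
    calc ENNReal.ofReal (hatw v (Rr (j+1)) * 2^j / 2)
        = ENNReal.ofReal c * ENNReal.ofReal (Rr (j+1) - Rr j) := by
          rw [← ENNReal.ofReal_mul (by positivity)]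
          congr 1
          have e1 : 1 - Rr j = ((2:ℝ)^j)⁻¹ := one_sub_Rr j
          have e2 : Rr (j+1) - Rr j = ((2:ℝ)^(j+1))⁻¹ := by
            have := one_sub_Rr (j+1)
            have := one_sub_Rr j
            have h3 : ((2:ℝ)^(j+1))⁻¹ + ((2:ℝ)^(j+1))⁻¹ = ((2:ℝ)^j)⁻¹ := by
              rw [pow_succ]
              field_simp
              ring
            linarith [one_sub_Rr (j+1), one_sub_Rr j]
          rw [hc, e1, e2, pow_succ]
          have h2j : ((2:ℝ)^j) ≠ 0 := by positivity
          field_simp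
          ring
      _ ≤ _ := h2
  have hsplit : (∫⁻ s in Set.Ioo (Rr j) (Rr (j+1)), ENNReal.ofReal (hatw v s / (1-s)^2))
      + Phi v (Rr (j+1)) ≤ Phi v (Rr j) := by
    have hdisj : Disjoint (Set.Ioo (Rr j) (Rr (j+1))) (Set.Ioo (Rr (j+1)) (1:ℝ)) := by
      apply Set.disjoint_left.mpr
      intro x hx hx'
      exact absurd (lt_trans hx.2 hx'.1) (lt_irrefl x)
    have hunion := lintegral_union (measurableSet_Ioo (a := Rr (j+1)) (b := (1:ℝ)))
      hdisj (f := fun s => ENNReal.ofReal (hatw v s / (1-s)^2)) (μ := volume)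
    have hsub : Set.Ioo (Rr j) (Rr (j+1)) ∪ Set.Ioo (Rr (j+1)) 1 ⊆ Set.Ioo (Rr j) 1 := by
      intro x hx
      rcases hx with hx | hx
      · exact ⟨hx.1, lt_trans hx.2 hmemj1.2⟩
      · exact ⟨lt_of_le_of_lt hab hx.1, hx.2⟩
    calc (∫⁻ s in Set.Ioo (Rr j) (Rr (j+1)), ENNReal.ofReal (hatw v s / (1-s)^2))
        + Phi v (Rr (j+1))
        = ∫⁻ s in Set.Ioo (Rr j) (Rr (j+1)) ∪ Set.Ioo (Rr (j+1)) 1,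
            ENNReal.ofReal (hatw v s / (1-s)^2) := hunion.symm
      _ ≤ Phi v (Rr j) := lintegral_mono_set hsub
  have htot : ENNReal.ofReal (hatw v (Rr (j+1)) * 2^j / 2) + Phi v (Rr (j+1)) ≤ Phi v (Rr j) :=
    le_trans (add_le_add_left hlow _) hsplit
  have hfinj := Phi_fin hv hM1 hmemj
  have hfinj1 := Phi_fin hv hM1 hmemj1
  have h4 := ENNReal.toReal_mono hfinj htot
  rw [ENNReal.toReal_add (by simp) hfinj1, ENNReal.toReal_ofReal (by positivity)] at h4
  linarith

lemma Rpow_quarter {m : ℕ} (hm : 1 ≤ m) : (1/4:ℝ) ≤ (Rr m)^(2^m) := by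
  obtain ⟨d, rfl⟩ : ∃ d, m = d + 1 := ⟨m - 1, by omega⟩
  have hx : ((2:ℝ)^(d+1))⁻¹ ≤ 1 := by
    rw [inv_le_one_iff₀]; right; exact one_le_pow₀ one_le_two
  have hinner : (1/2:ℝ) ≤ (Rr (d+1))^(2^d) := by
    have hb := one_add_mul_le_pow (a := -((2:ℝ)^(d+1))⁻¹) (by linarith) (2^d)
    have he : 1 + (2^d : ℕ) * (-((2:ℝ)^(d+1))⁻¹) = 1/2 := by
      push_cast
      rw [pow_succ]
      field_simp
      ring
    rw [he] at hb
    calc (1/2:ℝ) ≤ (1 + -((2:ℝ)^(d+1))⁻¹)^(2^d) := hb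
      _ = (Rr (d+1))^(2^d) := by rw [Rr]; ring_nf
  calc (1/4:ℝ) = (1/2)^2 := by norm_num
    _ ≤ ((Rr (d+1))^(2^d))^2 := pow_le_pow_left₀ (by norm_num) hinner 2
    _ = (Rr (d+1))^(2^(d+1)) := by rw [← pow_mul, pow_succ]

lemma vx_lower (hv : RadialWeight v) {m : ℕ} (hm : 1 ≤ m) :
    (1/4:ℝ) * hatw v (Rr m) ≤ vx v (2^m) := by
  have hmem := Rr_mem_Ioo hm
  have h0 : (0:ℝ) ≤ Rr m := hmem.1.le
  have h1 : Rr m ≤ 1 := hmem.2.le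
  have hwnn : 0 ≤ hatw v (Rr m) := hatw_nonneg hv h0 h1
  have hstep1 : (Rr m)^(2^m) * hatw v (Rr m) ≤ ∫ s in (Rr m)..1, s^(2^m) * v s := by
    have hmono : ∫ s in (Rr m)..1, (Rr m)^(2^m) * v s ≤ ∫ s in (Rr m)..1, s^(2^m) * v s := by
      apply intervalIntegral.integral_mono_ae_restrict h1
        ((aux_ii hv h0 h1 le_rfl).const_mul _) (mom_ii hv _ h0 h1 le_rfl)
      have hne : ∀ᵐ s ∂(volume.restrict (Set.Icc (Rr m) 1)), s ≠ (1:ℝ) :=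
        aux_ae_ne_one.filter_mono (ae_mono Measure.restrict_le_self)
      filter_upwards [hne, ae_restrict_mem measurableSet_Icc] with s hs hsmem
      have hs1 : s < 1 := lt_of_le_of_ne hsmem.2 hs
      have hv0 : 0 ≤ v s := (hv.2.1 s ⟨le_trans h0 hsmem.1, hs1⟩).le
      apply mul_le_mul_of_nonneg_right _ hv0
      exact pow_le_pow_left₀ h0 hsmem.1 _
    rw [intervalIntegral.integral_const_mul] at hmono
    exact hmono
  have hstep2 : (0:ℝ) ≤ ∫ s in (0:ℝ)..(Rr m), s^(2^m) * v s := by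
    apply intervalIntegral.integral_nonneg h0
    intro s hs
    have hs1 : s < 1 := lt_of_le_of_lt hs.2 hmem.2
    exact mul_nonneg (pow_nonneg hs.1 _) (hv.2.1 s ⟨hs.1, hs1⟩).le
  have hadd := intervalIntegral.integral_add_adjacent_intervals
    (mom_ii hv (2^m) le_rfl h0 h1) (mom_ii hv (2^m) h0 h1 le_rfl)
  have hq := Rpow_quarter hm
  have : (1/4:ℝ) * hatw v (Rr m) ≤ (Rr m)^(2^m) * hatw v (Rr m) :=
    mul_le_mul_of_nonneg_right hq hwnn
  unfold vx
  rw [← hadd]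
  linarith

lemma hatw_decay (hv : RadialWeight v) (hM1 : M1v v < ⊤) {C : ℝ} (hC1 : 1 ≤ C)
    (hC : ∀ r' ∈ Set.Ico (0:ℝ) 1, hatw v r' ≤ C * hatw v ((1+r')/2)) :
    ∃ D θ : ℝ, 0 < D ∧ 0 < θ ∧ θ < 1 ∧ ∀ n i : ℕ, 1 ≤ n →
      hatw v (Rr (n+i)) ≤ D * θ^i * ((2:ℝ)^i)⁻¹ * hatw v (Rr n) := by
  have hC0 : (0:ℝ) < C := by linarith
  set K2 : ℝ := ((M1v v)^2).toReal with hK2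
  have hK2nn : 0 ≤ K2 := ENNReal.toReal_nonneg
  set φ : ℕ → ℝ := fun j => (Phi v (Rr j)).toReal with hφ
  have hWpos : ∀ j : ℕ, 0 < hatw v (Rr j) := fun j =>
    hatw_pos hv (Rr_nonneg j) (Rr_lt_one j)
  have hRhalf : ∀ j : ℕ, 1 ≤ j → Rr j ∈ Set.Ico (1/2:ℝ) 1 := by
    intro j hj
    exact ⟨by rw [← Rr_one_half]; exact Rr_mono hj, Rr_lt_one j⟩
  have hup : ∀ j : ℕ, 1 ≤ j → φ j ≤ K2 * C * hatw v (Rr j) * 2^j := by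
    intro j hj
    have h := Phi_up_real hv hM1 hC1 hC (hRhalf j hj)
    rw [one_sub_Rr] at h
    have hpos : (0:ℝ) < C * hatw v (Rr j) * 2^j := by
      have := hWpos j; positivity
    have h2 := mul_le_mul_of_nonneg_right h hpos.le
    calc φ j = (Phi v (Rr j)).toReal * (((2:ℝ)^j)⁻¹ / (C * hatw v (Rr j)))
        * (C * hatw v (Rr j) * 2^j) := by
          have hW := hWpos j
          have h2j : ((2:ℝ)^j) ≠ 0 := by positivity
          field_simp
          rfl
      _ ≤ K2 * (C * hatw v (Rr j) * 2^j) := h2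
      _ = K2 * C * hatw v (Rr j) * 2^j := by ring
  have hlowphi : ∀ j : ℕ, 1 ≤ j → hatw v (Rr (j+1)) * 2^j / 2 ≤ φ j := by
    intro j hj
    have h := Phi_low_real hv hM1 (Rr_mem_Ioo hj)
    rw [← Rr_succ, one_sub_Rr] at h
    calc hatw v (Rr (j+1)) * 2^j / 2
        = hatw v (Rr (j+1)) / (2 * ((2:ℝ)^j)⁻¹) := by
          have h2j : ((2:ℝ)^j) ≠ 0 := by positivity
          field_simp
      _ ≤ φ j := h
  have hφnn : ∀ j, 0 ≤ φ j := fun j => ENNReal.toReal_nonneg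
  have hK2pos : 0 < K2 := by
    have h1 := hlowphi 1 le_rfl
    have h2 := hup 1 le_rfl
    have h3 := hWpos 2
    have h4 := hWpos 1
    norm_num at h1
    nlinarith [mul_pos hC0 h4]
  set θ : ℝ := 4*C*K2/(1+4*C*K2) with hθ
  have h4CK : (0:ℝ) < 4*C*K2 := by positivity
  have hθpos : 0 < θ := by rw [hθ]; positivity
  have hθ0 : 0 ≤ θ := hθpos.le
  have hθ1 : θ < 1 := by
    rw [hθ, div_lt_one (by linarith)]
    linarith
  have hstep : ∀ j : ℕ, 1 ≤ j → φ (j+1) ≤ θ * φ j := by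
    intro j hj
    have hsplit := Phi_split hv hM1 j hj
    have hupj1 := hup (j+1) (by omega)
    have hWj1 := hWpos (j+1)
    -- W_{j+1} * 2^j / 2 ≥ φ(j+1) / (4*C*K2)
    have hW_lower : φ (j+1) / (4*C*K2) ≤ hatw v (Rr (j+1)) * 2^j / 2 := by
      rw [div_le_iff₀ h4CK]
      have h2j : (0:ℝ) < (2:ℝ)^j := by positivity
      -- φ(j+1) ≤ K2*C*W*2^(j+1) = W*2^j/2 * (4CK2) / ... : 2^(j+1) = 2*2^j
      calc φ (j+1) ≤ K2 * C * hatw v (Rr (j+1)) * 2^(j+1) := hupj1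
        _ = hatw v (Rr (j+1)) * 2^j / 2 * (4*C*K2) := by rw [pow_succ]; ring
    have hs : φ (j+1) + φ (j+1)/(4*C*K2) ≤ φ j := by
      have := hsplit
      have h5 : (Phi v (Rr (j+1))).toReal = φ (j+1) := rfl
      linarith [hW_lower]
    have he : θ * (φ (j+1) + φ (j+1)/(4*C*K2)) = φ (j+1) := by
      rw [hθ]
      field_simp
      ring
    calc φ (j+1) = θ * (φ (j+1) + φ (j+1)/(4*C*K2)) := he.symm
      _ ≤ θ * φ j := mul_le_mul_of_nonneg_left hs hθ0
  have hchain : ∀ (n : ℕ), 1 ≤ n → ∀ (i : ℕ), φ (n+i) ≤ θ^i * φ n := by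
    intro n hn i
    induction i with
    | zero => simp
    | succ i ih =>
      calc φ (n+(i+1)) = φ ((n+i)+1) := by rw [Nat.add_assoc]
        _ ≤ θ * φ (n+i) := hstep (n+i) (by omega)
        _ ≤ θ * (θ^i * φ n) := mul_le_mul_of_nonneg_left ih hθ0
        _ = θ^(i+1) * φ n := by rw [pow_succ]; ring
  refine ⟨2*C^2*K2, θ, by positivity, hθpos, hθ1, ?_⟩
  intro n i hn
  have hni : 1 ≤ n + i := by omega
  have hdoub : hatw v (Rr (n+i)) ≤ C * hatw v (Rr (n+i+1)) := by
    have := hC (Rr (n+i)) ⟨Rr_nonneg _, Rr_lt_one _⟩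
    rwa [← Rr_succ] at this
  have hlow := hlowphi (n+i) hni
  have hupn := hup n hn
  have hch := hchain n hn i
  have h2ni : (0:ℝ) < (2:ℝ)^(n+i) := by positivity
  have h2n : (0:ℝ) < (2:ℝ)^n := by positivity
  have h2i : (0:ℝ) < (2:ℝ)^i := by positivity
  -- W(R(n+i+1)) ≤ 2 φ(n+i) / 2^(n+i)
  have hW1 : hatw v (Rr (n+i+1)) ≤ 2 * φ (n+i) * ((2:ℝ)^(n+i))⁻¹ := by
    have h2 : hatw v (Rr (n+i+1)) * 2^(n+i) ≤ 2 * φ (n+i) := by linarith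
    calc hatw v (Rr (n+i+1)) = hatw v (Rr (n+i+1)) * 2^(n+i) * ((2:ℝ)^(n+i))⁻¹ := by
          field_simp
      _ ≤ 2 * φ (n+i) * ((2:ℝ)^(n+i))⁻¹ := mul_le_mul_of_nonneg_right h2 (by positivity)
  calc hatw v (Rr (n+i))
      ≤ C * hatw v (Rr (n+i+1)) := hdoub
    _ ≤ C * (2 * φ (n+i) * ((2:ℝ)^(n+i))⁻¹) :=
        mul_le_mul_of_nonneg_left hW1 hC0.le
    _ ≤ C * (2 * (θ^i * φ n) * ((2:ℝ)^(n+i))⁻¹) := by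
        apply mul_le_mul_of_nonneg_left _ hC0.le
        apply mul_le_mul_of_nonneg_right _ (by positivity)
        apply mul_le_mul_of_nonneg_left hch (by norm_num)
    _ ≤ C * (2 * (θ^i * (K2 * C * hatw v (Rr n) * 2^n)) * ((2:ℝ)^(n+i))⁻¹) := by
        apply mul_le_mul_of_nonneg_left _ hC0.le
        apply mul_le_mul_of_nonneg_right _ (by positivity)
        apply mul_le_mul_of_nonneg_left _ (by norm_num)
        exact mul_le_mul_of_nonneg_left hupn (pow_nonneg hθ0 i)
    _ = 2*C^2*K2 * θ^i * ((2:ℝ)^i)⁻¹ * hatw v (Rr n) := by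
        rw [pow_add]
        field_simp

lemma sum_Icc_geo {ρ : ℝ} (h0 : 0 ≤ ρ) (h1 : ρ < 1) (k : ℕ) :
    ∑ n ∈ Finset.Icc 1 k, ρ^(k-n) ≤ (1-ρ)⁻¹ := by
  have h1ρ : 0 < 1 - ρ := by linarith
  induction k with
  | zero =>
    rw [Finset.Icc_eq_empty (by omega), Finset.sum_empty]
    positivity
  | succ k ih =>
    have hmem : k+1 ∉ Finset.Icc 1 k := by simp
    rw [← Finset.insert_Icc_right_eq_Icc_add_one (by omega), Finset.sum_insert hmem]
    have he : ∀ n ∈ Finset.Icc 1 k, ρ^(k+1-n) = ρ * ρ^(k-n) := by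
      intro n hn
      have hn' := Finset.mem_Icc.mp hn
      rw [show k+1-n = (k-n)+1 by omega, pow_succ]; ring
    rw [Finset.sum_congr rfl he, ← Finset.mul_sum, Nat.sub_self, pow_zero]
    have h2 : ρ * ∑ n ∈ Finset.Icc 1 k, ρ^(k-n) ≤ ρ * (1-ρ)⁻¹ :=
      mul_le_mul_of_nonneg_left ih h0
    have he2 : ρ * (1-ρ)⁻¹ + 1 = (1-ρ)⁻¹ := by field_simp; ring
    linarith

/-- Lemma 3.6: if `v ∈ D̂` and `M₁(v) < ∞` then for every `q > 0`,
`Σ_{n=1}^k 2^{-qn} v_{2^{n+1}}^{-q} ≤ C 2^{-qk} v_{2^{k+1}}^{-q}` for all `k ≥ 1`. -/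
theorem statement12 (v : ℝ → ℝ) (hv : RadialWeight v) (hD : DoublingD v)
    (hM1 : M1v v < ⊤) :
    ∀ q : ℝ, 0 < q → ∃ C : ℝ, 0 < C ∧ ∀ k : ℕ, 1 ≤ k →
      (∑ n ∈ Finset.Icc 1 k, (2:ℝ) ^ (-(q * (n:ℝ))) * (vx v (2^(n+1))) ^ (-q)) ≤
        C * (2:ℝ) ^ (-(q * (k:ℝ))) * (vx v (2^(k+1))) ^ (-q) := by
  obtain ⟨C, hC1, hC⟩ := hD
  obtain ⟨C₁, hC₁pos, hmom⟩ := moment_le hv hC1 hC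
  obtain ⟨D, θ, hD0, hθpos, hθ1, hdecay⟩ := hatw_decay hv hM1 hC1 hC
  intro q hq
  set ρ : ℝ := θ ^ q with hρ
  have hρ0 : 0 ≤ ρ := Real.rpow_nonneg hθpos.le q
  have hρ1 : ρ < 1 := Real.rpow_lt_one hθpos.le hθ1 hq
  set E : ℝ := 4*C₁*D with hE
  have hEpos : 0 < E := by positivity
  have hEq : 0 < E ^ q := Real.rpow_pos_of_pos hEpos q
  have h1ρ : 0 < 1 - ρ := by linarith
  refine ⟨E^q * (1-ρ)⁻¹, by positivity, ?_⟩
  intro k hk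
  have hvk : 0 < vx v (2^(k+1)) := vx_pos hv _
  have hvkq : 0 < (vx v (2^(k+1)))^(-q) := Real.rpow_pos_of_pos hvk _
  have h2k : 0 < (2:ℝ)^(-(q*(k:ℝ))) := Real.rpow_pos_of_pos two_pos _
  have hterm : ∀ n ∈ Finset.Icc 1 k, (2:ℝ) ^ (-(q * (n:ℝ))) * (vx v (2^(n+1))) ^ (-q)
      ≤ (E^q * ((2:ℝ) ^ (-(q * (k:ℝ))) * (vx v (2^(k+1)))^(-q))) * ρ^(k-n) := by
    intro n hn
    obtain ⟨hn1, hnk⟩ := Finset.mem_Icc.mp hn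
    set i := k - n with hi
    have hki : k = n + i := by omega
    have hvn : 0 < vx v (2^(n+1)) := vx_pos hv _
    have hkey : vx v (2^(k+1)) ≤ E * θ^i * ((2:ℝ)^i)⁻¹ * vx v (2^(n+1)) := by
      have h1 : vx v (2^(k+1)) ≤ C₁ * hatw v (Rr (k+1)) := hmom (k+1)
      have h2 : hatw v (Rr ((n+1)+i)) ≤ D * θ^i * ((2:ℝ)^i)⁻¹ * hatw v (Rr (n+1)) :=
        hdecay (n+1) i (by omega)
      have h3 : hatw v (Rr (n+1)) ≤ 4 * vx v (2^(n+1)) := by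
        have := vx_lower hv (m := n+1) (by omega); linarith
      have hkk : (n+1)+i = k+1 := by omega
      rw [hkk] at h2
      have hD' : (0:ℝ) ≤ D * θ^i * ((2:ℝ)^i)⁻¹ := by positivity
      calc vx v (2^(k+1)) ≤ C₁ * hatw v (Rr (k+1)) := h1
        _ ≤ C₁ * (D * θ^i * ((2:ℝ)^i)⁻¹ * hatw v (Rr (n+1))) :=
            mul_le_mul_of_nonneg_left h2 hC₁pos.le
        _ ≤ C₁ * (D * θ^i * ((2:ℝ)^i)⁻¹ * (4 * vx v (2^(n+1)))) := by
            apply mul_le_mul_of_nonneg_left _ hC₁pos.le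
            exact mul_le_mul_of_nonneg_left h3 hD'
        _ = E * θ^i * ((2:ℝ)^i)⁻¹ * vx v (2^(n+1)) := by rw [hE]; ring
    set G : ℝ := E * θ^i * ((2:ℝ)^i)⁻¹ with hG
    have hGpos : 0 < G := by positivity
    have hge : vx v (2^(k+1)) / G ≤ vx v (2^(n+1)) := by
      rw [div_le_iff₀ hGpos]
      nlinarith [hkey]
    have hx : (vx v (2^(n+1)))^(-q) ≤ (vx v (2^(k+1)) / G)^(-q) :=
      Real.rpow_le_rpow_of_nonpos (by positivity) hge (by linarith)
    have hexp : (vx v (2^(k+1)) / G)^(-q) = (vx v (2^(k+1)))^(-q) * G^q := by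
      rw [Real.div_rpow hvk.le hGpos.le, Real.rpow_neg hGpos.le q, div_inv_eq_mul]
    have hGq : G^q = E^q * (ρ^i * (2:ℝ)^(-(q*(i:ℝ)))) := by
      rw [hG, Real.mul_rpow (by positivity) (by positivity),
        Real.mul_rpow (by positivity) (by positivity)]
      rw [mul_assoc]
      congr 1
      congr 1
      · rw [← Real.rpow_natCast θ i, ← Real.rpow_mul hθpos.le, hρ,
          ← Real.rpow_natCast (θ^q) i, ← Real.rpow_mul hθpos.le]
        congr 1
        ring
      · rw [Real.inv_rpow (by positivity), ← Real.rpow_natCast (2:ℝ) i,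
          ← Real.rpow_mul (by norm_num), ← Real.rpow_neg (by norm_num)]
        congr 1
        ring
    have h2add : (2:ℝ)^(-(q*(n:ℝ))) * (2:ℝ)^(-(q*(i:ℝ))) = (2:ℝ)^(-(q*(k:ℝ))) := by
      rw [← Real.rpow_add (by norm_num : (0:ℝ) < 2)]
      congr 1
      rw [hki]
      push_cast
      ring
    have h2n : 0 < (2:ℝ)^(-(q*(n:ℝ))) := Real.rpow_pos_of_pos two_pos _
    calc (2:ℝ) ^ (-(q * (n:ℝ))) * (vx v (2^(n+1))) ^ (-q)
        ≤ (2:ℝ) ^ (-(q * (n:ℝ))) * ((vx v (2^(k+1)))^(-q) * G^q) := by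
          apply mul_le_mul_of_nonneg_left _ h2n.le
          rw [← hexp]
          exact hx
      _ = E^q * ρ^i * ((2:ℝ)^(-(q*(n:ℝ))) * (2:ℝ)^(-(q*(i:ℝ)))) * (vx v (2^(k+1)))^(-q) := by
          rw [hGq]; ring
      _ = E^q * ρ^i * (2:ℝ)^(-(q*(k:ℝ))) * (vx v (2^(k+1)))^(-q) := by rw [h2add]
      _ = (E^q * ((2:ℝ) ^ (-(q * (k:ℝ))) * (vx v (2^(k+1)))^(-q))) * ρ^(k-n) := by
          rw [← hi]; ring
  calc ∑ n ∈ Finset.Icc 1 k, (2:ℝ) ^ (-(q * (n:ℝ))) * (vx v (2^(n+1))) ^ (-q)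
      ≤ ∑ n ∈ Finset.Icc 1 k,
          (E^q * ((2:ℝ) ^ (-(q * (k:ℝ))) * (vx v (2^(k+1)))^(-q))) * ρ^(k-n) :=
        Finset.sum_le_sum hterm
    _ = (E^q * ((2:ℝ) ^ (-(q * (k:ℝ))) * (vx v (2^(k+1)))^(-q)))
        * ∑ n ∈ Finset.Icc 1 k, ρ^(k-n) := by rw [← Finset.mul_sum]
    _ ≤ (E^q * ((2:ℝ) ^ (-(q * (k:ℝ))) * (vx v (2^(k+1)))^(-q))) * (1-ρ)⁻¹ := by
        apply mul_le_mul_of_nonneg_left (sum_Icc_geo hρ0 hρ1 k)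
        positivity
    _ = E^q * (1-ρ)⁻¹ * (2:ℝ) ^ (-(q * (k:ℝ))) * (vx v (2^(k+1)))^(-q) := by ring

end
end

section
/- Let v be a radial weight in the class D̂ satisfying M₂(v) = sup_{0<r<1} (∫₀^r v̂(s)/(1-s)⁴ ds)^{1/2} (∫_r¹ (1-s)²/v̂(s) ds)^{1/2} < ∞. Then there exists γ = γ(v) ∈ (0,1) such that ∫_{(1+r)/2}^1 (1-s)²/v̂(s) ds ≤ γ · ∫_r^1 (1-s)²/v̂(s) ds for all r ∈ (0,1). -/
open MeasureTheory Real Set Filter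

noncomputable section

section aux13
variable {v : ℝ → ℝ}
lemma aux13_ii (hv : RadialWeight v) {a b : ℝ} (ha : 0 ≤ a) (hab : a ≤ b) (hb : b ≤ 1) :
    IntervalIntegrable v volume a b := by
  apply (((integrableOn_Icc_iff_integrableOn_Ioo).mpr hv.2.2).mono_set ?_).intervalIntegrable
  rw [Set.uIcc_of_le hab]
  exact Set.Icc_subset_Icc ha hb
lemma aux13_anti (hv : RadialWeight v) {a b : ℝ} (ha : 0 ≤ a) (hab : a ≤ b) (hb : b ≤ 1) :
    hatw v b ≤ hatw v a := by
  have h1 := aux13_ii hv ha hab hb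
  have h2 := aux13_ii hv (le_trans ha hab) hb le_rfl
  have hsplit := intervalIntegral.integral_add_adjacent_intervals h1 h2
  have hnn : 0 ≤ ∫ x in a..b, v x := by
    apply intervalIntegral.integral_nonneg_of_ae_restrict hab
    have hne : ∀ᵐ x : ℝ, x ≠ (1:ℝ) := by
      refine ae_iff.mpr ?_
      simp [not_not]
    show ∀ᵐ x ∂(volume.restrict (Set.Icc a b)), 0 ≤ v x
    rw [MeasureTheory.ae_restrict_iff' measurableSet_Icc]
    filter_upwards [hne] with x hx hmem
    exact (hv.2.1 x ⟨le_trans ha hmem.1, lt_of_le_of_ne (le_trans hmem.2 hb) hx⟩).le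
  have : hatw v a = (∫ x in a..b, v x) + hatw v b := by
    rw [hatw, hatw, ← hsplit]
  linarith
lemma aux13_pos (hv : RadialWeight v) {r : ℝ} (h0 : 0 ≤ r) (h1 : r < 1) : 0 < hatw v r :=
  intervalIntegral.intervalIntegral_pos_of_pos_on (aux13_ii hv h0 h1.le le_rfl)
    (fun x hx => hv.2.1 x ⟨h0.trans hx.1.le, hx.2⟩) h1
end aux13

lemma aux13_split (f : ℝ → ENNReal) {a m b : ℝ} (ham : a < m) (hmb : m ≤ b) :
    ∫⁻ s in Set.Ioo a b, f s = (∫⁻ s in Set.Ioo a m, f s) + ∫⁻ s in Set.Ioo m b, f s := by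
  have hd : Disjoint (Set.Ioo a m) (Set.Ico m b) := by
    rw [Set.disjoint_left]; rintro x ⟨_, h2⟩ ⟨h3, _⟩; exact absurd h3 (not_le.2 h2)
  have h2 : (∫⁻ s in Set.Ico m b, f s) = ∫⁻ s in Set.Ioo m b, f s :=
    (setLIntegral_congr Ioo_ae_eq_Ico).symm
  rw [← Set.Ioo_union_Ico_eq_Ioo ham hmb, lintegral_union measurableSet_Ico hd, h2]

lemma aux13_lb {f : ℝ → ℝ} {a b c : ℝ} (hc : 0 ≤ c)
    (h : ∀ s ∈ Set.Ioo a b, c ≤ f s) :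
    ENNReal.ofReal (c * (b - a)) ≤ ∫⁻ s in Set.Ioo a b, ENNReal.ofReal (f s) := by
  calc ENNReal.ofReal (c * (b - a)) = ∫⁻ _ in Set.Ioo a b, ENNReal.ofReal c := by
        rw [setLIntegral_const, Real.volume_Ioo, ENNReal.ofReal_mul hc]
    _ ≤ _ := setLIntegral_mono' measurableSet_Ioo fun s hs => ENNReal.ofReal_le_ofReal (h s hs)

lemma aux13_ub {f : ℝ → ℝ} {a b c : ℝ}
    (h : ∀ s ∈ Set.Ioo a b, f s ≤ c) :
    (∫⁻ s in Set.Ioo a b, ENNReal.ofReal (f s)) ≤ ENNReal.ofReal c * ENNReal.ofReal (b - a) := by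
  calc (∫⁻ s in Set.Ioo a b, ENNReal.ofReal (f s)) ≤ ∫⁻ _ in Set.Ioo a b, ENNReal.ofReal c :=
        setLIntegral_mono' measurableSet_Ioo fun s hs => ENNReal.ofReal_le_ofReal (h s hs)
    _ = _ := by rw [setLIntegral_const, Real.volume_Ioo]

lemma aux13_half (x : ENNReal) : x ^ (1/2:ℝ) * x ^ (1/2:ℝ) = x := by
  rw [← ENNReal.rpow_add_of_nonneg (1/2) (1/2) (by norm_num) (by norm_num)]
  norm_num

/-- inequality (3.4): if `v ∈ D̂` and `M₂(v) < ∞`, there is `γ ∈ (0,1)` with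
`∫_{(1+r)/2}^1 (1-s)²/v̂(s) ds ≤ γ ∫_r^1 (1-s)²/v̂(s) ds` for all `r ∈ (0,1)`. -/
theorem statement13 (v : ℝ → ℝ) (hv : RadialWeight v) (hD : DoublingD v)
    (hM2 : M2v v < ⊤) :
    ∃ γ : ℝ, 0 < γ ∧ γ < 1 ∧ ∀ r ∈ Set.Ioo (0:ℝ) 1,
      ∫⁻ s in Set.Ioo ((1+r)/2) 1, ENNReal.ofReal ((1-s)^2 / hatw v s) ≤
        ENNReal.ofReal γ * ∫⁻ s in Set.Ioo r 1, ENNReal.ofReal ((1-s)^2 / hatw v s) := by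
  set Φ : ℝ → ENNReal := fun r => ∫⁻ s in Set.Ioo r 1, ENNReal.ofReal ((1-s)^2 / hatw v s) with hΦ
  set A : ℝ → ENNReal := fun r => ∫⁻ s in Set.Ioo (0:ℝ) r, ENNReal.ofReal (hatw v s / (1-s)^4) with hA
  have hM : M2v v ≠ ⊤ := hM2.ne
  -- product bound from M₂
  have hAB : ∀ r ∈ Set.Ioo (0:ℝ) 1, A r * Φ r ≤ M2v v * M2v v := by
    intro r hr
    have h : (A r) ^ (1/2:ℝ) * (Φ r) ^ (1/2:ℝ) ≤ M2v v :=
      le_biSup (fun r => (∫⁻ s in Set.Ioo (0:ℝ) r, ENNReal.ofReal (hatw v s / (1-s)^4)) ^ (1/2 : ℝ) *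
        (∫⁻ s in Set.Ioo r 1, ENNReal.ofReal ((1-s)^2 / hatw v s)) ^ (1/2 : ℝ)) hr
    calc A r * Φ r = ((A r) ^ (1/2:ℝ) * (Φ r) ^ (1/2:ℝ)) * ((A r) ^ (1/2:ℝ) * (Φ r) ^ (1/2:ℝ)) := by
          rw [mul_mul_mul_comm, aux13_half, aux13_half]
      _ ≤ M2v v * M2v v := mul_le_mul' h h
  -- lower bound for I(r) = ∫_r^{(1+r)/2}
  have key_lb : ∀ r, 0 ≤ r → r < 1 →
      ENNReal.ofReal ((1-r)^3 / (8 * hatw v r)) ≤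
        ∫⁻ s in Set.Ioo r ((1+r)/2), ENNReal.ofReal ((1-s)^2 / hatw v s) := by
    intro r hr0 hr1
    have hWr : 0 < hatw v r := aux13_pos hv hr0 hr1
    have heq : (1-r)^3 / (8 * hatw v r) = ((1-r)/2)^2 / hatw v r * ((1+r)/2 - r) := by
      field_simp; ring
    rw [heq]
    apply aux13_lb (by positivity)
    rintro s ⟨hs1, hs2⟩
    have hs1' : r < s := hs1
    have hslt : s < 1 := by linarith
    have hWs : 0 < hatw v s := aux13_pos hv (by linarith) hslt
    have hWsr : hatw v s ≤ hatw v r := aux13_anti hv hr0 hs1.le hslt.le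
    have hnum : ((1-r)/2)^2 ≤ (1-s)^2 := by nlinarith
    calc ((1-r)/2)^2 / hatw v r ≤ (1-s)^2 / hatw v s :=
          div_le_div₀ (sq_nonneg _) hnum hWs hWsr
      _ = _ := rfl
  -- lower bound for A(r) when r ≥ 1/2
  have key_A : ∀ r, 1/2 ≤ r → r < 1 →
      ENNReal.ofReal (hatw v r / (16 * (1-r)^3)) ≤ A r := by
    intro r hr2 hr1
    have hWr : 0 < hatw v r := aux13_pos hv (by linarith) hr1
    have hsub : Set.Ioo (2*r-1) r ⊆ Set.Ioo 0 r := fun x hx => ⟨by linarith [hx.1], hx.2⟩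
    refine le_trans ?_ (lintegral_mono_set hsub)
    have heq : hatw v r / (16 * (1-r)^3) = hatw v r / (16 * (1-r)^4) * (r - (2*r-1)) := by
      have h1r : (0:ℝ) < 1 - r := by linarith
      field_simp; ring
    rw [heq]
    apply aux13_lb (by positivity)
    rintro s ⟨hs1, hs2⟩
    have hWs : hatw v r ≤ hatw v s := aux13_anti hv (by linarith) hs2.le hr1.le
    have hden : (1-s)^4 ≤ 16 * (1-r)^4 := by
      have h1 : (0:ℝ) ≤ 1 - s := by linarith
      have h2 : 1 - s ≤ 2 * (1-r) := by linarith
      have := pow_le_pow_left₀ h1 h2 4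
      nlinarith [this]
    have hpow : (0:ℝ) < (1-s)^4 := pow_pos (by linarith) 4
    exact div_le_div₀ (le_trans hWr.le hWs) hWs hpow hden
  -- finiteness of Φ 0
  have hΦhalf : Φ (1/2) ≠ ⊤ := by
    intro htop
    have h1 := hAB (1/2) (by norm_num)
    have h2 : ENNReal.ofReal (hatw v (1/2) / (16 * (1-(1/2:ℝ))^3)) ≤ A (1/2) :=
      key_A (1/2) le_rfl (by norm_num)
    have hW : 0 < hatw v (1/2) := aux13_pos hv (by norm_num) (by norm_num)
    have hA0 : A (1/2) ≠ 0 := by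
      intro h0
      rw [h0] at h2
      have : hatw v (1/2) / (16 * (1-(1/2:ℝ))^3) ≤ 0 := by
        by_contra hcon
        exact absurd (le_antisymm h2 (by positivity)) (ENNReal.ofReal_pos.mpr (not_le.1 hcon)).ne'
      nlinarith
    rw [htop, ENNReal.mul_top hA0] at h1
    exact absurd (top_le_iff.mp h1) (ENNReal.mul_ne_top hM hM)
  have hW2 : 0 < hatw v (1/2) := aux13_pos hv (by norm_num) (by norm_num)
  have hΦ0 : Φ 0 ≠ ⊤ := by
    have hsplit : Φ 0 = (∫⁻ s in Set.Ioo (0:ℝ) (1/2), ENNReal.ofReal ((1-s)^2 / hatw v s)) + Φ (1/2) :=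
      aux13_split _ (by norm_num) (by norm_num)
    have hub : (∫⁻ s in Set.Ioo (0:ℝ) (1/2), ENNReal.ofReal ((1-s)^2 / hatw v s)) ≤
        ENNReal.ofReal (1 / hatw v (1/2)) * ENNReal.ofReal ((1/2) - 0) := by
      apply aux13_ub
      rintro s ⟨hs1, hs2⟩
      have hWs : 0 < hatw v s := aux13_pos hv hs1.le (by linarith)
      have hWsr : hatw v (1/2) ≤ hatw v s := aux13_anti hv hs1.le hs2.le (by norm_num)
      have : (1-s)^2 ≤ 1 := by nlinarith
      exact div_le_div₀ (by norm_num) this hW2 hWsr |>.trans_eq (by norm_num) |>.trans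
        (le_of_eq rfl)
    rw [hsplit]
    exact ENNReal.add_ne_top.mpr ⟨(hub.trans_lt (by finiteness)).ne, hΦhalf⟩
  have hΦr_fin : ∀ r, 0 ≤ r → Φ r ≠ ⊤ := by
    intro r hr
    refine ne_top_of_le_ne_top hΦ0 (lintegral_mono_set fun x hx => ⟨lt_of_le_of_lt hr hx.1, hx.2⟩)
  -- constants
  set K2 : ℝ := (M2v v).toReal * (M2v v).toReal with hK2
  have hK2nn : 0 ≤ K2 := mul_nonneg ENNReal.toReal_nonneg ENNReal.toReal_nonneg
  have hMM : M2v v * M2v v = ENNReal.ofReal K2 := by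
    rw [hK2, ENNReal.ofReal_mul ENNReal.toReal_nonneg, ENNReal.ofReal_toReal hM]
  set T : ℝ := (Φ 0).toReal with hT
  have hTnn : 0 ≤ T := ENNReal.toReal_nonneg
  have hW0 : 0 < hatw v 0 := aux13_pos hv le_rfl (by norm_num)
  set δ : ℝ := min (1/2) (min (1/(128*(K2+1))) (1/(64 * hatw v 0 * (T+1)))) with hδ
  have hδpos : 0 < δ := by
    apply lt_min (by norm_num)
    apply lt_min
    · positivity
    · positivity
  have hδhalf : δ ≤ 1/2 := min_le_left _ _
  have hδ1 : δ ≤ 1/(128*(K2+1)) := le_trans (min_le_right _ _) (min_le_left _ _)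
  have hδ2 : δ ≤ 1/(64 * hatw v 0 * (T+1)) := le_trans (min_le_right _ _) (min_le_right _ _)
  refine ⟨1 - δ, by linarith, by linarith, ?_⟩
  rintro r ⟨hr0, hr1⟩
  have hm1 : (1+r)/2 < 1 := by linarith
  have hrm : r < (1+r)/2 := by linarith
  have hsplit : Φ r = (∫⁻ s in Set.Ioo r ((1+r)/2), ENNReal.ofReal ((1-s)^2 / hatw v s)) + Φ ((1+r)/2) :=
    aux13_split _ hrm hm1.le
  set I : ENNReal := ∫⁻ s in Set.Ioo r ((1+r)/2), ENNReal.ofReal ((1-s)^2 / hatw v s) with hI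
  have hWr : 0 < hatw v r := aux13_pos hv hr0.le hr1
  -- Claim: ofReal δ * Φ r ≤ I
  have claim : ENNReal.ofReal δ * Φ r ≤ I := by
    rcases le_or_gt (1/2) r with hcase | hcase
    · -- r ≥ 1/2 : use M₂
      have h1 := hAB r ⟨hr0, hr1⟩
      have h2 := key_A r hcase hr1
      set a : ℝ := hatw v r / (16 * (1-r)^3) with ha
      have hapos : 0 < a := by
        have : (0:ℝ) < 1 - r := by linarith
        positivity
      have h3 : ENNReal.ofReal a * Φ r ≤ ENNReal.ofReal K2 := by
        rw [← hMM]
        exact le_trans (mul_le_mul_left h2 _) h1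
      have h4 : Φ r ≤ ENNReal.ofReal (a⁻¹ * K2) := by
        have : Φ r = ENNReal.ofReal a⁻¹ * (ENNReal.ofReal a * Φ r) := by
          rw [← mul_assoc, ← ENNReal.ofReal_mul (by positivity), inv_mul_cancel₀ hapos.ne',
            ENNReal.ofReal_one, one_mul]
        rw [this, ENNReal.ofReal_mul (by positivity)]
        exact mul_le_mul_right h3 _
      have h5 : ENNReal.ofReal δ * Φ r ≤ ENNReal.ofReal (δ * (a⁻¹ * K2)) := by
        rw [ENNReal.ofReal_mul hδpos.le]
        exact mul_le_mul_right h4 _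
      refine le_trans h5 (le_trans ?_ (key_lb r hr0.le hr1))
      apply ENNReal.ofReal_le_ofReal
      have hainv : a⁻¹ = 16 * (1-r)^3 / hatw v r := by
        rw [ha, inv_div]
      rw [hainv]
      have ht : 0 ≤ (1-r)^3 / hatw v r := by
        have : (0:ℝ) < 1 - r := by linarith
        positivity
      have hd : δ * (K2 + 1) ≤ 1/128 := by
        rw [← le_div_iff₀ (by positivity)]
        calc δ ≤ 1/(128*(K2+1)) := hδ1
          _ = 1/128 / (K2+1) := (div_div 1 128 (K2+1)).symm
      have hdk : δ * K2 ≤ 1/128 := by nlinarith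
      have hexp : δ * (16 * (1-r)^3 / hatw v r * K2) = 16 * ((1-r)^3 / hatw v r) * (δ * K2) := by
        ring
      rw [hexp]
      calc 16 * ((1-r)^3 / hatw v r) * (δ * K2) ≤ 16 * ((1-r)^3 / hatw v r) * (1/128) := by
            apply mul_le_mul_of_nonneg_left hdk (by positivity)
        _ = (1-r)^3 / (8 * hatw v r) := by
            field_simp
            ring
    · -- r < 1/2 : use finiteness of Φ 0
      have hIlb : ENNReal.ofReal (1 / (64 * hatw v 0)) ≤ I := by
        refine le_trans ?_ (key_lb r hr0.le hr1)
        apply ENNReal.ofReal_le_ofReal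
        have hWr0 : hatw v r ≤ hatw v 0 := aux13_anti hv le_rfl hr0.le hr1.le
        have h18 : (1/8 : ℝ) ≤ (1-r)^3 := by
          have h12 : (1/2:ℝ) ≤ 1-r := by linarith
          have := pow_le_pow_left₀ (by norm_num : (0:ℝ) ≤ 1/2) h12 3
          norm_num at this
          linarith
        calc (1:ℝ) / (64 * hatw v 0) = (1/8) / (8 * hatw v 0) := by ring
          _ ≤ (1-r)^3 / (8 * hatw v r) :=
              div_le_div₀ (by positivity) h18 (by positivity) (by linarith)
      have hΦle : Φ r ≤ Φ 0 := lintegral_mono_set fun x hx => ⟨lt_trans hr0 hx.1, hx.2⟩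
      have hΦ0eq : Φ 0 = ENNReal.ofReal T := (ENNReal.ofReal_toReal hΦ0).symm
      calc ENNReal.ofReal δ * Φ r ≤ ENNReal.ofReal δ * ENNReal.ofReal T := by
            rw [← hΦ0eq]; exact mul_le_mul_right hΦle _
        _ = ENNReal.ofReal (δ * T) := (ENNReal.ofReal_mul hδpos.le).symm
        _ ≤ ENNReal.ofReal (1 / (64 * hatw v 0)) := by
            apply ENNReal.ofReal_le_ofReal
            rw [le_div_iff₀ (by positivity)]
            have h0 : δ * (64 * hatw v 0 * (T+1)) ≤ 1 := by
              rw [← le_div_iff₀ (by positivity)]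
              calc δ ≤ 1/(64 * hatw v 0 * (T+1)) := hδ2
                _ = 1 / (64 * hatw v 0 * (T+1)) := rfl
            nlinarith [mul_nonneg hδpos.le hW0.le]
        _ ≤ I := hIlb
  -- conclude
  have hfin : ENNReal.ofReal δ * Φ r ≠ ⊤ :=
    ENNReal.mul_ne_top ENNReal.ofReal_ne_top (hΦr_fin r hr0.le)
  have hsum : Φ ((1+r)/2) + ENNReal.ofReal δ * Φ r ≤
      ENNReal.ofReal (1-δ) * Φ r + ENNReal.ofReal δ * Φ r := by
    calc Φ ((1+r)/2) + ENNReal.ofReal δ * Φ r ≤ Φ ((1+r)/2) + I := add_le_add_right claim _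
      _ = Φ r := by rw [hsplit, add_comm]
      _ = (ENNReal.ofReal (1-δ) + ENNReal.ofReal δ) * Φ r := by
          rw [← ENNReal.ofReal_add (by linarith) hδpos.le]
          norm_num
      _ = ENNReal.ofReal (1-δ) * Φ r + ENNReal.ofReal δ * Φ r := by rw [add_mul]
  exact (ENNReal.add_le_add_iff_right hfin).mp hsum

end
end
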